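/- With the notation above and A = √(I_m − θ̂θ), the function f = det(A)^{-1} = det(I_m − θ̂θ)^{-1/2} satisfies, for all 1 ≤ l ≤ m and 1 ≤ j ≤ 2n, the differential equation Σ_{t=1}^{m} (A²)_{lt} ∂_{θ_{jt}} f = − θ̂_{lj} f. -/

import Mathlib

noncomputable section

open Matrix

/-- The standard symplectic matrix `J = [[0, Iₙ],[-Iₙ, 0]]`, with entries in `Λ`. -/
def sympJ (n : ℕ) (Λ : Type*) [Ring Λ] :
    Matrix (Fin n ⊕ Fin n) (Fin n ⊕ Fin n) Λ :=
  Matrix.fromBlocks 0 1 (-1) 0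

/-- The determinant of a square matrix over a (possibly noncommutative) ring,
via the Leibniz formula with ordered products. -/
def ncDet {m : ℕ} {Λ : Type*} [Ring Λ] (M : Matrix (Fin m) (Fin m) Λ) : Λ :=
  ∑ σ : Equiv.Perm (Fin m),
    (Equiv.Perm.sign σ : ℤ) • ((List.finRange m).map fun i => M (σ i) i).prod

/-- The binomial coefficient `binom(-1/2, k)`, the `k`-th Taylor coefficient of
`(1+x)^{-1/2}`. -/
def invSqrtCoeff (k : ℕ) : ℝ :=
  (∏ i ∈ Finset.range k, (-(1 : ℝ) / 2 - (i : ℝ))) / (Nat.factorial k)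

namespace Aux

variable {m n : ℕ} {Λ : Type*} [Ring Λ] [Algebra ℝ Λ]

/-- Submodule spanned by products of at least `d` Grassmann generators. -/
def Jmod (θ : Matrix (Fin n ⊕ Fin n) (Fin m) Λ) (d : ℕ) : Submodule ℝ Λ :=
  Submodule.span ℝ {v | ∃ L : List ((Fin n ⊕ Fin n) × Fin m),
    d ≤ L.length ∧ v = (L.map fun pq => θ pq.1 pq.2).prod}

variable {θ : Matrix (Fin n ⊕ Fin n) (Fin m) Λ}
variable (hodd : ∀ i j k l, θ i j * θ k l = -(θ k l * θ i j))

include hodd in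
lemma theta_sq (p : Fin n ⊕ Fin n) (q : Fin m) : θ p q * θ p q = 0 := by
  have h := hodd p q p q
  have h2 : (2 : ℝ) • (θ p q * θ p q) = 0 := by
    rw [two_smul]
    nth_rewrite 1 [h]
    exact neg_add_cancel _
  have := congrArg (fun z => ((2 : ℝ)⁻¹) • z) h2
  simpa [smul_smul] using this

include hodd in
lemma theta_mul_prod_zero :
    ∀ (L : List ((Fin n ⊕ Fin n) × Fin m)) (p : (Fin n ⊕ Fin n) × Fin m), p ∈ L →
      θ p.1 p.2 * (L.map fun pq => θ pq.1 pq.2).prod = 0 := by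
  intro L
  induction L with
  | nil => intro p hp; simp at hp
  | cons b t ih =>
    intro p hp
    rcases List.mem_cons.mp hp with h | h
    · subst h
      rw [List.map_cons, List.prod_cons, ← mul_assoc, theta_sq hodd, zero_mul]
    · rw [List.map_cons, List.prod_cons, ← mul_assoc, hodd, neg_mul, mul_assoc,
        ih p h, mul_zero, neg_zero]

include hodd in
lemma not_nodup_prod_zero :
    ∀ (L : List ((Fin n ⊕ Fin n) × Fin m)), ¬ L.Nodup →
      (L.map fun pq => θ pq.1 pq.2).prod = 0 := by
  intro L
  induction L with
  | nil => intro h; exact absurd List.nodup_nil h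
  | cons b t ih =>
    intro h
    rw [List.map_cons, List.prod_cons]
    rcases Classical.em (b ∈ t) with hb | hb
    · exact theta_mul_prod_zero hodd t b hb
    · have : ¬ t.Nodup := by
        intro hn; exact h (List.nodup_cons.mpr ⟨hb, hn⟩)
      rw [ih this, mul_zero]

include hodd in
lemma long_prod_zero (L : List ((Fin n ⊕ Fin n) × Fin m))
    (hL : 2 * n * m + 1 ≤ L.length) :
    (L.map fun pq => θ pq.1 pq.2).prod = 0 := by
  by_cases hnd : L.Nodup
  · have hcard := hnd.length_le_card
    simp [Fintype.card_prod, Fintype.card_sum, Fintype.card_fin] at hcard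
    have h2 := le_trans hL hcard
    ring_nf at h2
    linarith
  · exact not_nodup_prod_zero hodd L hnd

lemma Jmod_le {d e : ℕ} (h : d ≤ e) : Jmod θ e ≤ Jmod θ d := by
  apply Submodule.span_mono
  rintro v ⟨L, hL, rfl⟩
  exact ⟨L, le_trans h hL, rfl⟩

lemma Jmod_mul {d e : ℕ} {u v : Λ} (hu : u ∈ Jmod θ d) (hv : v ∈ Jmod θ e) :
    u * v ∈ Jmod θ (d + e) := by
  induction hu using Submodule.span_induction with
  | mem u hu =>
    obtain ⟨L₁, hL₁, rfl⟩ := hu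
    induction hv using Submodule.span_induction with
    | mem v hv =>
      obtain ⟨L₂, hL₂, rfl⟩ := hv
      apply Submodule.subset_span
      exact ⟨L₁ ++ L₂, by simpa using Nat.add_le_add hL₁ hL₂,
        by rw [List.map_append, List.prod_append]⟩
    | zero => rw [mul_zero]; exact Submodule.zero_mem _
    | add a b _ _ ha hb => rw [mul_add]; exact Submodule.add_mem _ ha hb
    | smul r a _ ha => rw [mul_smul_comm]; exact Submodule.smul_mem _ _ ha
  | zero => rw [zero_mul]; exact Submodule.zero_mem _
  | add a b _ _ ha hb => rw [add_mul]; exact Submodule.add_mem _ ha hb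
  | smul r a _ ha => rw [smul_mul_assoc]; exact Submodule.smul_mem _ _ ha

include hodd in
lemma Jmod_mul_theta {u : Λ} (hu : u ∈ Jmod θ (2 * n * m)) (p : Fin n ⊕ Fin n) (q : Fin m) :
    u * θ p q = 0 := by
  induction hu using Submodule.span_induction with
  | mem u hu =>
    obtain ⟨L, hL, rfl⟩ := hu
    have : (L.map fun pq => θ pq.1 pq.2).prod * θ p q
        = ((L ++ [(p, q)]).map fun pq => θ pq.1 pq.2).prod := by
      rw [List.map_append, List.prod_append]; simp
    rw [this, long_prod_zero hodd]
    simpa using hL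
  | zero => rw [zero_mul]
  | add a b _ _ ha hb => rw [add_mul, ha, hb, add_zero]
  | smul r a _ ha => rw [smul_mul_assoc, ha, smul_zero]


omit hodd

section Hat
variable (θ)

/-- `θ̂ = θᵀ J`. -/
def hatM : Matrix (Fin m) (Fin n ⊕ Fin n) Λ := θᵀ * sympJ n Λ

/-- `X = θ̂ θ`. -/
def XM : Matrix (Fin m) (Fin m) Λ := θᵀ * sympJ n Λ * θ

end Hat

lemma hat_inl (a : Fin m) (q : Fin n) : hatM θ a (Sum.inl q) = -θ (Sum.inr q) a := by
  simp [hatM, sympJ, Matrix.mul_apply, Fintype.sum_sum_type, Matrix.one_apply,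
    Matrix.fromBlocks_apply₁₁, Matrix.fromBlocks_apply₂₁]

lemma hat_inr (a : Fin m) (q : Fin n) : hatM θ a (Sum.inr q) = θ (Sum.inl q) a := by
  simp [hatM, sympJ, Matrix.mul_apply, Fintype.sum_sum_type, Matrix.one_apply,
    Matrix.fromBlocks_apply₁₂, Matrix.fromBlocks_apply₂₂]

lemma XM_apply (a b : Fin m) :
    XM θ a b = ∑ q : Fin n,
      (θ (Sum.inl q) a * θ (Sum.inr q) b - θ (Sum.inr q) a * θ (Sum.inl q) b) := by
  have : XM θ a b = ∑ i : Fin n ⊕ Fin n, hatM θ a i * θ i b := by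
    simp [XM, hatM, Matrix.mul_apply]
  rw [this, Fintype.sum_sum_type]
  simp only [hat_inl, hat_inr, neg_mul]
  rw [← Finset.sum_add_distrib]
  congr 1; funext q
  abel

variable (hcent : ∀ i j k l (c : Λ), Commute (θ i j * θ k l) c)

include hcent in
lemma XM_central (a b : Fin m) : XM θ a b ∈ Subring.center Λ := by
  rw [Subring.mem_center_iff]
  intro g
  rw [XM_apply, Finset.mul_sum, Finset.sum_mul]
  congr 1; funext q
  rw [mul_sub, sub_mul, (hcent _ _ _ _ g).eq, (hcent _ _ _ _ g).eq]

include hodd in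
lemma XM_symm (a b : Fin m) : XM θ a b = XM θ b a := by
  rw [XM_apply, XM_apply]
  congr 1; funext q
  rw [hodd (Sum.inl q) b (Sum.inr q) a, hodd (Sum.inr q) b (Sum.inl q) a]
  abel

lemma XM_mem_J2 (a b : Fin m) : XM θ a b ∈ Jmod θ 2 := by
  rw [XM_apply]
  apply Submodule.sum_mem
  intro q _
  apply Submodule.sub_mem
  · exact Submodule.subset_span ⟨[(Sum.inl q, a), (Sum.inr q, b)], by simp, by simp⟩
  · exact Submodule.subset_span ⟨[(Sum.inr q, a), (Sum.inl q, b)], by simp, by simp⟩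

/-- `ncDet` of a mapped matrix. -/
lemma ncDet_map {S : Type*} [Ring S] (f : S →+* Λ) (M : Matrix (Fin m) (Fin m) S) :
    ncDet (M.map f) = f (ncDet M) := by
  rw [ncDet, ncDet, map_sum]
  congr 1; funext σ
  rw [map_zsmul, map_list_prod f, List.map_map]
  rfl

lemma ncDet_eq_det {S : Type*} [CommRing S] (M : Matrix (Fin m) (Fin m) S) :
    ncDet M = M.det := by
  rw [ncDet, Matrix.det_apply']
  congr 1; funext σ
  rw [← Fin.prod_univ_def, zsmul_eq_mul]


section Dcalc

variable (D : (Fin n ⊕ Fin n) → Fin m → Module.End ℝ Λ)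
variable (hD1 : ∀ i j, D i j 1 = 0)
variable (hDθ : ∀ i j k l (u : Λ),
      D i j (θ k l * u) = (if k = i ∧ l = j then u else 0) - θ k l * D i j u)

/-- Leibniz elements for the Grassmann derivative `D j t`. -/
def IsLeib (j : Fin n ⊕ Fin n) (t : Fin m) (u : Λ) : Prop :=
  ∀ v : Λ, D j t (u * v) = D j t u * v + u * D j t v

variable {D}
variable {j : Fin n ⊕ Fin n} {t : Fin m}

include hD1 in
lemma Dθ_eq (k : Fin n ⊕ Fin n) (l : Fin m) (hDθ' : ∀ i j k l (u : Λ),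
      D i j (θ k l * u) = (if k = i ∧ l = j then u else 0) - θ k l * D i j u) :
    D j t (θ k l) = if k = j ∧ l = t then 1 else 0 := by
  have h := hDθ' j t k l 1
  rw [mul_one, hD1, mul_zero, sub_zero] at h
  exact h

include hD1 hDθ in
lemma Dpair (p : Fin n ⊕ Fin n) (q : Fin m) (r : Fin n ⊕ Fin n) (s : Fin m) :
    D j t (θ p q * θ r s)
      = (if p = j ∧ q = t then θ r s else 0) - (if r = j ∧ s = t then θ p q else 0) := by
  rw [hDθ, Dθ_eq hD1 _ _ hDθ, mul_ite, mul_one, mul_zero]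

include hD1 in
lemma isLeib_one : IsLeib D j t 1 := by
  intro v; rw [one_mul, hD1, zero_mul, zero_add, one_mul]

lemma isLeib_zero : IsLeib D j t 0 := by
  intro v; simp

lemma isLeib_add {u w : Λ} (hu : IsLeib D j t u) (hw : IsLeib D j t w) :
    IsLeib D j t (u + w) := by
  intro v
  rw [add_mul, map_add, hu, hw, map_add, add_mul, add_mul]
  abel

lemma isLeib_smul (r : ℝ) {u : Λ} (hu : IsLeib D j t u) : IsLeib D j t (r • u) := by
  intro v
  rw [smul_mul_assoc, (D j t).map_smul, hu, (D j t).map_smul, smul_add, smul_mul_assoc,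
    smul_mul_assoc]

lemma isLeib_neg {u : Λ} (hu : IsLeib D j t u) : IsLeib D j t (-u) := by
  have := isLeib_smul (-1 : ℝ) hu
  simpa using this

lemma isLeib_sub {u w : Λ} (hu : IsLeib D j t u) (hw : IsLeib D j t w) :
    IsLeib D j t (u - w) := by
  rw [sub_eq_add_neg]; exact isLeib_add hu (isLeib_neg hw)

lemma isLeib_zsmul (z : ℤ) {u : Λ} (hu : IsLeib D j t u) : IsLeib D j t (z • u) := by
  have := isLeib_smul (z : ℝ) hu
  rwa [Int.cast_smul_eq_zsmul] at this

include hD1 in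
lemma isLeib_mul {u w : Λ} (hu : IsLeib D j t u) (hw : IsLeib D j t w) :
    IsLeib D j t (u * w) := by
  intro v
  rw [mul_assoc, hu, hw, hu w, add_mul, mul_add, mul_assoc, mul_assoc, mul_assoc]
  abel

lemma isLeib_sum {ι : Type*} (s : Finset ι) (u : ι → Λ)
    (h : ∀ i ∈ s, IsLeib D j t (u i)) : IsLeib D j t (∑ i ∈ s, u i) := by
  classical
  induction s using Finset.induction_on with
  | empty => simpa using isLeib_zero
  | @insert _ _ ha ih =>
    rw [Finset.sum_insert ha]
    exact isLeib_add (h _ (Finset.mem_insert_self _ _))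
      (ih fun i hi => h i (Finset.mem_insert_of_mem hi))

include hD1 hDθ in
lemma isLeib_pair (p : Fin n ⊕ Fin n) (q : Fin m) (r : Fin n ⊕ Fin n) (s : Fin m) :
    IsLeib D j t (θ p q * θ r s) := by
  intro v
  simp only [Dpair hD1 hDθ, mul_assoc, hDθ, sub_mul, ite_mul, zero_mul, mul_sub, mul_ite,
    mul_zero]
  abel

include hD1 hDθ in
lemma isLeib_X (a b : Fin m) : IsLeib D j t (XM θ a b) := by
  rw [XM_apply]
  apply isLeib_sum
  intro q _
  exact isLeib_sub (isLeib_pair hD1 hDθ _ _ _ _) (isLeib_pair hD1 hDθ _ _ _ _)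

include hD1 hDθ in
lemma isLeib_B (a b : Fin m) : IsLeib D j t ((1 - XM θ : Matrix (Fin m) (Fin m) Λ) a b) := by
  rw [Matrix.sub_apply, Matrix.one_apply]
  apply isLeib_sub _ (isLeib_X hD1 hDθ a b)
  by_cases h : a = b
  · simpa [h] using isLeib_one hD1
  · simpa [h] using isLeib_zero


include hD1 hDθ in
lemma D_X (a b : Fin m) :
    D j t (XM θ a b)
      = -((if a = t then hatM θ b j else 0) + (if b = t then hatM θ a j else 0)) := by
  rw [XM_apply, map_sum]
  cases j with
  | inl q₀ =>
    have key : ∀ q : Fin n,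
        D (Sum.inl q₀) t (θ (Sum.inl q) a * θ (Sum.inr q) b - θ (Sum.inr q) a * θ (Sum.inl q) b)
        = (if q = q₀ then (if a = t then θ (Sum.inr q₀) b else 0)
            + (if b = t then θ (Sum.inr q₀) a else 0) else 0) := by
      intro q
      rw [map_sub, Dpair hD1 hDθ, Dpair hD1 hDθ]
      by_cases hq : q = q₀
      · subst hq
        simp only [ite_and]
        by_cases ha : a = t <;> by_cases hb : b = t <;> simp [ha, hb] <;> try abel
      · simp [hq, ite_and]
    rw [Finset.sum_congr rfl (fun q _ => key q), Finset.sum_ite_eq' Finset.univ q₀]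
    by_cases ha : a = t <;> by_cases hb : b = t <;> simp [ha, hb, hat_inl] <;> try abel
  | inr q₀ =>
    have key : ∀ q : Fin n,
        D (Sum.inr q₀) t (θ (Sum.inl q) a * θ (Sum.inr q) b - θ (Sum.inr q) a * θ (Sum.inl q) b)
        = (if q = q₀ then -((if b = t then θ (Sum.inl q₀) a else 0)
            + (if a = t then θ (Sum.inl q₀) b else 0)) else 0) := by
      intro q
      rw [map_sub, Dpair hD1 hDθ, Dpair hD1 hDθ]
      by_cases hq : q = q₀
      · subst hq
        simp only [ite_and]
        by_cases ha : a = t <;> by_cases hb : b = t <;> simp [ha, hb] <;> try abel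
      · simp [hq, ite_and]
    rw [Finset.sum_congr rfl (fun q _ => key q), Finset.sum_ite_eq' Finset.univ q₀]
    by_cases ha : a = t <;> by_cases hb : b = t <;> simp [ha, hb, hat_inr] <;> try abel

include hD1 hDθ in
lemma D_B (a b : Fin m) :
    D j t ((1 - XM θ : Matrix (Fin m) (Fin m) Λ) a b)
      = (if a = t then hatM θ b j else 0) + (if b = t then hatM θ a j else 0) := by
  rw [Matrix.sub_apply, map_sub, D_X hD1 hDθ]
  have h1 : D j t ((1 : Matrix (Fin m) (Fin m) Λ) a b) = 0 := by
    by_cases h : a = b <;> simp [Matrix.one_apply, h, hD1]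
  rw [h1]
  abel

end Dcalc

lemma center_comm (z : Subring.center Λ) (a : Λ) : a * (z : Λ) = (z : Λ) * a :=
  Subring.mem_center_iff.mp z.2 a

section Det

variable (hcent : ∀ i j k l (c : Λ), Commute (θ i j * θ k l) c)

/-- The matrix `1 - X` viewed over the center of `Λ`. -/
def Bc : Matrix (Fin m) (Fin m) (Subring.center Λ) :=
  Matrix.of fun a b => ⟨(1 - XM θ : Matrix (Fin m) (Fin m) Λ) a b, by
    rw [Matrix.sub_apply]
    apply sub_mem
    · by_cases h : a = b <;>
        simp [Matrix.one_apply, h, Subring.one_mem, Subring.zero_mem]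
    · exact XM_central hcent a b⟩

lemma Bc_coe (a b : Fin m) :
    ((Bc hcent a b : Subring.center Λ) : Λ) = (1 - XM θ : Matrix (Fin m) (Fin m) Λ) a b := rfl

include hodd in
lemma Bc_symm : (Bc hcent)ᵀ = Bc hcent := by
  ext a b
  show ((1 - XM θ : Matrix (Fin m) (Fin m) Λ)) b a = (1 - XM θ : Matrix (Fin m) (Fin m) Λ) a b
  rw [Matrix.sub_apply, Matrix.sub_apply, XM_symm hodd b a]
  by_cases h : a = b <;> simp [Matrix.one_apply, h]
  exact fun hh => absurd hh.symm h

lemma cdet_expand :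
    (((Bc (θ := θ) hcent).det : Subring.center Λ) : Λ)
      = ∑ σ : Equiv.Perm (Fin m), (Equiv.Perm.sign σ : ℤ) •
          ((∏ i, Bc (θ := θ) hcent (σ i) i : Subring.center Λ) : Λ) := by
  show (Subring.center Λ).subtype _ = _
  rw [Matrix.det_apply, map_sum]
  refine Finset.sum_congr rfl fun σ _ => ?_
  rw [Units.smul_def, map_zsmul]
  rfl

variable {D : (Fin n ⊕ Fin n) → Fin m → Module.End ℝ Λ}
variable (hD1 : ∀ i j, D i j 1 = 0)
variable (hDθ : ∀ i j k l (u : Λ),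
      D i j (θ k l * u) = (if k = i ∧ l = j then u else 0) - θ k l * D i j u)
variable {j : Fin n ⊕ Fin n} {t : Fin m}

include hD1 in
lemma D_coe_prod {ι : Type*} [DecidableEq ι] (s : Finset ι) (u : ι → Subring.center Λ)
    (h : ∀ i, IsLeib D j t (u i : Λ)) :
    D j t ((∏ i ∈ s, u i : Subring.center Λ) : Λ)
      = ∑ i ∈ s, ((∏ k ∈ s.erase i, u k : Subring.center Λ) : Λ) * D j t (u i : Λ) := by
  induction s using Finset.induction_on with
  | empty => simpa using hD1 j t
  | @insert a s ha ih =>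
    rw [Finset.prod_insert ha]
    push_cast
    rw [h a, ih, Finset.sum_insert ha, Finset.erase_insert ha]
    have e1 : D j t ((u a : Λ)) * ((∏ i ∈ s, u i : Subring.center Λ) : Λ)
        = ((∏ i ∈ s, u i : Subring.center Λ) : Λ) * D j t ((u a : Λ)) :=
      center_comm _ _
    rw [e1, Finset.mul_sum]
    congr 1
    refine Finset.sum_congr rfl fun i hi => ?_
    have hne : i ≠ a := fun hh => ha (hh ▸ hi)
    rw [Finset.erase_insert_of_ne hne.symm, Finset.prod_insert (fun hh => ha (Finset.mem_of_mem_erase hh))]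
    push_cast
    rw [mul_assoc]

include hD1 in
lemma isLeib_coe_prod {ι : Type*} (s : Finset ι) (u : ι → Subring.center Λ)
    (h : ∀ i, IsLeib D j t (u i : Λ)) :
    IsLeib D j t ((∏ i ∈ s, u i : Subring.center Λ) : Λ) := by
  classical
  induction s using Finset.induction_on with
  | empty => simpa using isLeib_one hD1
  | @insert a s ha ih =>
    rw [Finset.prod_insert ha]
    push_cast
    exact isLeib_mul hD1 (h a) ih

include hD1 hDθ in
lemma isLeib_cdet : IsLeib D j t (((Bc (θ := θ) hcent).det : Subring.center Λ) : Λ) := by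
  rw [cdet_expand]
  apply isLeib_sum
  intro σ _
  exact isLeib_zsmul _ (isLeib_coe_prod hD1 _ _ fun i => isLeib_B hD1 hDθ _ _)


include hodd in
lemma cramer_row_single (l : Fin m) :
    Matrix.cramer (Bc (θ := θ) hcent) (fun a => Bc (θ := θ) hcent l a)
      = Pi.single l (Bc (θ := θ) hcent).det := by
  have h := Matrix.cramer_transpose_row_self (Bc (θ := θ) hcent) l
  rwa [Bc_symm hodd hcent] at h

lemma hA_eq (l i : Fin m) :
    (∑ σ : Equiv.Perm (Fin m), (Equiv.Perm.sign σ : ℤ) •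
        ((∏ k ∈ Finset.univ.erase i, Bc (θ := θ) hcent (σ k) k) * Bc (θ := θ) hcent l (σ i)))
      = Matrix.cramer (Bc (θ := θ) hcent) (fun a => Bc (θ := θ) hcent l a) i := by
  rw [Matrix.cramer_apply, Matrix.det_apply]
  refine Finset.sum_congr rfl fun σ _ => ?_
  rw [Units.smul_def]
  congr 1
  rw [← Finset.mul_prod_erase Finset.univ _ (Finset.mem_univ i), Matrix.updateCol_self,
    mul_comm]
  congr 1
  exact (Finset.prod_congr rfl fun k hk =>
    Matrix.updateCol_ne (Finset.ne_of_mem_erase hk)).symm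

lemma hC_eq (l i a : Fin m) :
    (∑ σ : Equiv.Perm (Fin m), (Equiv.Perm.sign σ : ℤ) •
        (if σ i = a then (∏ k ∈ Finset.univ.erase i, Bc (θ := θ) hcent (σ k) k)
            * Bc (θ := θ) hcent l i else 0))
      = Matrix.cramer (Bc (θ := θ) hcent) (Pi.single a 1) i * Bc (θ := θ) hcent l i := by
  rw [Matrix.cramer_apply, Matrix.det_apply, Finset.sum_mul]
  refine Finset.sum_congr rfl fun σ _ => ?_
  rw [Units.smul_def, smul_mul_assoc]
  congr 1
  have hprod : (∏ x ∈ Finset.univ.erase i,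
      (Bc (θ := θ) hcent).updateCol i (Pi.single a 1) (σ x) x)
      = ∏ k ∈ Finset.univ.erase i, Bc (θ := θ) hcent (σ k) k :=
    Finset.prod_congr rfl fun k hk => Matrix.updateCol_ne (Finset.ne_of_mem_erase hk)
  rw [← Finset.mul_prod_erase Finset.univ _ (Finset.mem_univ i), Matrix.updateCol_self,
    hprod, Pi.single_apply]
  by_cases h : σ i = a <;> simp [h]

include hodd in
lemma cramer_single_eq (a i : Fin m) :
    Matrix.cramer (Bc (θ := θ) hcent) (Pi.single a 1) i
      = (Bc (θ := θ) hcent).adjugate a i := by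
  rw [Matrix.adjugate_apply, Matrix.cramer_apply, ← Matrix.det_transpose,
    ← Matrix.updateRow_transpose, Bc_symm hodd hcent]

include hodd in
lemma adj_mul_eq (l a : Fin m) :
    (∑ i, Matrix.cramer (Bc (θ := θ) hcent) (Pi.single a 1) i * Bc (θ := θ) hcent l i)
      = if l = a then (Bc (θ := θ) hcent).det else 0 := by
  have hadj : ∀ i, (Bc (θ := θ) hcent).adjugate a i = (Bc (θ := θ) hcent).adjugate i a := by
    intro i
    conv_lhs => rw [← Matrix.transpose_apply ((Bc (θ := θ) hcent).adjugate) i a]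
    rw [Matrix.adjugate_transpose, Bc_symm hodd hcent]
  have : (∑ i, Matrix.cramer (Bc (θ := θ) hcent) (Pi.single a 1) i * Bc (θ := θ) hcent l i)
      = ∑ i, Bc (θ := θ) hcent l i * (Bc (θ := θ) hcent).adjugate i a := by
    refine Finset.sum_congr rfl fun i _ => ?_
    rw [cramer_single_eq hodd hcent, hadj i, mul_comm]
  rw [this]
  have hmul := congrFun (congrFun (Matrix.mul_adjugate (Bc (θ := θ) hcent)) l) a
  rw [Matrix.mul_apply] at hmul
  rw [hmul, Matrix.smul_apply, Matrix.one_apply, smul_eq_mul]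
  by_cases h : l = a <;> simp [h]


lemma coe_sum {ι : Type*} (s : Finset ι) (g : ι → Subring.center Λ) :
    ∑ i ∈ s, ((g i : Λ)) = ((∑ i ∈ s, g i : Subring.center Λ) : Λ) := by
  show _ = (Subring.center Λ).subtype _
  rw [map_sum]
  rfl

lemma coe_sum_zsmul {ι : Type*} (s : Finset ι) (g : ι → Subring.center Λ) (z : ι → ℤ) :
    ∑ i ∈ s, z i • ((g i : Λ)) = ((∑ i ∈ s, z i • g i : Subring.center Λ) : Λ) := by
  show _ = (Subring.center Λ).subtype _
  rw [map_sum]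
  exact Finset.sum_congr rfl fun i _ => (map_zsmul ((Subring.center Λ).subtype) _ _).symm

include hodd in
lemma T1_eq (l : Fin m) (j : Fin n ⊕ Fin n) :
    (∑ σ : Equiv.Perm (Fin m), (Equiv.Perm.sign σ : ℤ) •
      ∑ i, ((∏ k ∈ Finset.univ.erase i, Bc (θ := θ) hcent (σ k) k : Subring.center Λ) : Λ)
        * ((1 - XM θ : Matrix (Fin m) (Fin m) Λ) l (σ i) * hatM θ i j))
    = (((Bc (θ := θ) hcent).det : Subring.center Λ) : Λ) * hatM θ l j := by
  have step1 : ∀ (σ : Equiv.Perm (Fin m)) (i : Fin m),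
      ((∏ k ∈ Finset.univ.erase i, Bc (θ := θ) hcent (σ k) k : Subring.center Λ) : Λ)
        * ((1 - XM θ : Matrix (Fin m) (Fin m) Λ) l (σ i) * hatM θ i j)
      = ((((∏ k ∈ Finset.univ.erase i, Bc (θ := θ) hcent (σ k) k)
            * Bc (θ := θ) hcent l (σ i) : Subring.center Λ) : Λ)) * hatM θ i j := by
    intro σ i
    push_cast
    rw [mul_assoc]
    rfl
  calc (∑ σ : Equiv.Perm (Fin m), (Equiv.Perm.sign σ : ℤ) •
      ∑ i, ((∏ k ∈ Finset.univ.erase i, Bc (θ := θ) hcent (σ k) k : Subring.center Λ) : Λ)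
        * ((1 - XM θ : Matrix (Fin m) (Fin m) Λ) l (σ i) * hatM θ i j))
      = ∑ σ : Equiv.Perm (Fin m), ∑ i,
          ((Equiv.Perm.sign σ : ℤ) •
            ((((∏ k ∈ Finset.univ.erase i, Bc (θ := θ) hcent (σ k) k)
              * Bc (θ := θ) hcent l (σ i) : Subring.center Λ) : Λ))) * hatM θ i j := by
        refine Finset.sum_congr rfl fun σ _ => ?_
        rw [Finset.sum_congr rfl fun i _ => step1 σ i, Finset.smul_sum]
        exact Finset.sum_congr rfl fun i _ => (smul_mul_assoc _ _ _).symm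
    _ = ∑ i, ∑ σ : Equiv.Perm (Fin m),
          ((Equiv.Perm.sign σ : ℤ) •
            ((((∏ k ∈ Finset.univ.erase i, Bc (θ := θ) hcent (σ k) k)
              * Bc (θ := θ) hcent l (σ i) : Subring.center Λ) : Λ))) * hatM θ i j :=
        Finset.sum_comm
    _ = ∑ i, (∑ σ : Equiv.Perm (Fin m), (Equiv.Perm.sign σ : ℤ) •
          ((((∏ k ∈ Finset.univ.erase i, Bc (θ := θ) hcent (σ k) k)
            * Bc (θ := θ) hcent l (σ i) : Subring.center Λ) : Λ))) * hatM θ i j :=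
        Finset.sum_congr rfl fun i _ => (Finset.sum_mul _ _ _).symm
    _ = ∑ i, (((Pi.single l (Bc (θ := θ) hcent).det : Fin m → Subring.center Λ) i : Λ))
          * hatM θ i j := by
        refine Finset.sum_congr rfl fun i _ => ?_
        congr 1
        rw [coe_sum_zsmul, hA_eq hcent l i, cramer_row_single hodd hcent]
    _ = (((Bc (θ := θ) hcent).det : Subring.center Λ) : Λ) * hatM θ l j := by
        have key : ∀ i : Fin m,
            (((Pi.single l (Bc (θ := θ) hcent).det : Fin m → Subring.center Λ) i : Λ))
              * hatM θ i j
            = if i = l then (((Bc (θ := θ) hcent).det : Subring.center Λ) : Λ) * hatM θ i j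
              else 0 := by
          intro i
          rw [Pi.single_apply]
          by_cases h : i = l <;> simp [h]
        rw [Finset.sum_congr rfl fun i _ => key i, Finset.sum_ite_eq' Finset.univ l]
        simp


include hodd in
lemma T2_eq (l : Fin m) (j : Fin n ⊕ Fin n) :
    (∑ σ : Equiv.Perm (Fin m), (Equiv.Perm.sign σ : ℤ) •
      ∑ i, ((∏ k ∈ Finset.univ.erase i, Bc (θ := θ) hcent (σ k) k : Subring.center Λ) : Λ)
        * ((1 - XM θ : Matrix (Fin m) (Fin m) Λ) l i * hatM θ (σ i) j))
    = (((Bc (θ := θ) hcent).det : Subring.center Λ) : Λ) * hatM θ l j := by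
  have step1 : ∀ (σ : Equiv.Perm (Fin m)) (i : Fin m),
      ((∏ k ∈ Finset.univ.erase i, Bc (θ := θ) hcent (σ k) k : Subring.center Λ) : Λ)
        * ((1 - XM θ : Matrix (Fin m) (Fin m) Λ) l i * hatM θ (σ i) j)
      = ∑ a, ((if σ i = a then ((∏ k ∈ Finset.univ.erase i, Bc (θ := θ) hcent (σ k) k)
            * Bc (θ := θ) hcent l i : Subring.center Λ) else 0 : Subring.center Λ) : Λ)
          * hatM θ a j := by
    intro σ i
    have h1 : hatM θ (σ i) j = ∑ a, if σ i = a then hatM θ a j else 0 := by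
      rw [Finset.sum_ite_eq Finset.univ (σ i)]
      simp
    rw [h1, Finset.mul_sum, Finset.mul_sum]
    refine Finset.sum_congr rfl fun a _ => ?_
    by_cases h : σ i = a
    · simp only [h, if_pos rfl]
      push_cast
      rw [mul_assoc]
      rfl
    · simp [h]
  calc (∑ σ : Equiv.Perm (Fin m), (Equiv.Perm.sign σ : ℤ) •
      ∑ i, ((∏ k ∈ Finset.univ.erase i, Bc (θ := θ) hcent (σ k) k : Subring.center Λ) : Λ)
        * ((1 - XM θ : Matrix (Fin m) (Fin m) Λ) l i * hatM θ (σ i) j))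
      = ∑ σ : Equiv.Perm (Fin m), ∑ i, ∑ a,
          ((Equiv.Perm.sign σ : ℤ) •
            ((if σ i = a then ((∏ k ∈ Finset.univ.erase i, Bc (θ := θ) hcent (σ k) k)
              * Bc (θ := θ) hcent l i : Subring.center Λ) else 0 : Subring.center Λ) : Λ))
          * hatM θ a j := by
        refine Finset.sum_congr rfl fun σ _ => ?_
        rw [Finset.sum_congr rfl fun i _ => step1 σ i, Finset.smul_sum]
        refine Finset.sum_congr rfl fun i _ => ?_
        rw [Finset.smul_sum]
        exact Finset.sum_congr rfl fun a _ => (smul_mul_assoc _ _ _).symm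
    _ = ∑ i, ∑ a, ∑ σ : Equiv.Perm (Fin m),
          ((Equiv.Perm.sign σ : ℤ) •
            ((if σ i = a then ((∏ k ∈ Finset.univ.erase i, Bc (θ := θ) hcent (σ k) k)
              * Bc (θ := θ) hcent l i : Subring.center Λ) else 0 : Subring.center Λ) : Λ))
          * hatM θ a j := by
        rw [Finset.sum_comm]
        exact Finset.sum_congr rfl fun i _ => Finset.sum_comm
    _ = ∑ i, ∑ a, (((Matrix.cramer (Bc (θ := θ) hcent) (Pi.single a 1) i
          * Bc (θ := θ) hcent l i : Subring.center Λ) : Λ)) * hatM θ a j := by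
        refine Finset.sum_congr rfl fun i _ => Finset.sum_congr rfl fun a _ => ?_
        rw [← Finset.sum_mul]
        congr 1
        have : ∀ σ : Equiv.Perm (Fin m),
            ((if σ i = a then ((∏ k ∈ Finset.univ.erase i, Bc (θ := θ) hcent (σ k) k)
              * Bc (θ := θ) hcent l i : Subring.center Λ) else 0 : Subring.center Λ) : Λ)
            = (((if σ i = a then ((∏ k ∈ Finset.univ.erase i, Bc (θ := θ) hcent (σ k) k)
              * Bc (θ := θ) hcent l i : Subring.center Λ) else 0 : Subring.center Λ)) : Λ) :=
          fun σ => rfl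
        rw [coe_sum_zsmul Finset.univ
          (fun σ : Equiv.Perm (Fin m) =>
            (if σ i = a then ((∏ k ∈ Finset.univ.erase i, Bc (θ := θ) hcent (σ k) k)
              * Bc (θ := θ) hcent l i : Subring.center Λ) else 0 : Subring.center Λ))
          (fun σ => (Equiv.Perm.sign σ : ℤ)), hC_eq hcent l i a]
    _ = ∑ a, ((((if l = a then (Bc (θ := θ) hcent).det else 0 : Subring.center Λ)) : Λ))
          * hatM θ a j := by
        rw [Finset.sum_comm]
        refine Finset.sum_congr rfl fun a _ => ?_
        rw [← Finset.sum_mul]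
        congr 1
        rw [coe_sum Finset.univ
          (fun i => Matrix.cramer (Bc (θ := θ) hcent) (Pi.single a 1) i
            * Bc (θ := θ) hcent l i), adj_mul_eq hodd hcent l a]
    _ = (((Bc (θ := θ) hcent).det : Subring.center Λ) : Λ) * hatM θ l j := by
        have key : ∀ a : Fin m,
            ((((if l = a then (Bc (θ := θ) hcent).det else 0 : Subring.center Λ)) : Λ))
              * hatM θ a j
            = if l = a then (((Bc (θ := θ) hcent).det : Subring.center Λ) : Λ) * hatM θ a j
              else 0 := by
          intro a
          by_cases h : l = a <;> simp [h]
        rw [Finset.sum_congr rfl fun a _ => key a, Finset.sum_ite_eq Finset.univ l]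
        simp


include hodd hD1 hDθ in
lemma sum_B_D_det (l : Fin m) (jj : Fin n ⊕ Fin n) :
    ∑ t : Fin m, (1 - XM θ : Matrix (Fin m) (Fin m) Λ) l t
        * D jj t (((Bc (θ := θ) hcent).det : Subring.center Λ) : Λ)
      = (((Bc (θ := θ) hcent).det : Subring.center Λ) : Λ) * hatM θ l jj
        + (((Bc (θ := θ) hcent).det : Subring.center Λ) : Λ) * hatM θ l jj := by
  have hDdet : ∀ t : Fin m, D jj t (((Bc (θ := θ) hcent).det : Subring.center Λ) : Λ)
      = ∑ σ : Equiv.Perm (Fin m), (Equiv.Perm.sign σ : ℤ) •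
          ∑ i, ((∏ k ∈ Finset.univ.erase i, Bc (θ := θ) hcent (σ k) k : Subring.center Λ) : Λ)
            * D jj t ((1 - XM θ : Matrix (Fin m) (Fin m) Λ) (σ i) i) := by
    intro t
    rw [cdet_expand, map_sum]
    refine Finset.sum_congr rfl fun σ _ => ?_
    rw [map_zsmul]
    congr 1
    exact D_coe_prod hD1 Finset.univ (fun i => Bc (θ := θ) hcent (σ i) i)
      (fun i => isLeib_B hD1 hDθ _ _)
  have hsum_t : ∀ (a b : Fin m),
      (∑ t, (1 - XM θ : Matrix (Fin m) (Fin m) Λ) l t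
        * D jj t ((1 - XM θ : Matrix (Fin m) (Fin m) Λ) a b))
      = (1 - XM θ : Matrix (Fin m) (Fin m) Λ) l a * hatM θ b jj
        + (1 - XM θ : Matrix (Fin m) (Fin m) Λ) l b * hatM θ a jj := by
    intro a b
    have key : ∀ t, (1 - XM θ : Matrix (Fin m) (Fin m) Λ) l t
        * D jj t ((1 - XM θ : Matrix (Fin m) (Fin m) Λ) a b)
        = (if a = t then (1 - XM θ : Matrix (Fin m) (Fin m) Λ) l t * hatM θ b jj else 0)
          + (if b = t then (1 - XM θ : Matrix (Fin m) (Fin m) Λ) l t * hatM θ a jj else 0) := by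
      intro t
      rw [D_B hD1 hDθ, mul_add, mul_ite, mul_zero, mul_ite, mul_zero]
    rw [Finset.sum_congr rfl fun t _ => key t, Finset.sum_add_distrib,
      Finset.sum_ite_eq Finset.univ a, Finset.sum_ite_eq Finset.univ b]
    simp
  calc ∑ t : Fin m, (1 - XM θ : Matrix (Fin m) (Fin m) Λ) l t
        * D jj t (((Bc (θ := θ) hcent).det : Subring.center Λ) : Λ)
      = ∑ σ : Equiv.Perm (Fin m), (Equiv.Perm.sign σ : ℤ) •
          ∑ i, ∑ t, ((∏ k ∈ Finset.univ.erase i, Bc (θ := θ) hcent (σ k) k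
              : Subring.center Λ) : Λ)
            * ((1 - XM θ : Matrix (Fin m) (Fin m) Λ) l t
              * D jj t ((1 - XM θ : Matrix (Fin m) (Fin m) Λ) (σ i) i)) := by
        rw [Finset.sum_congr rfl fun t (_ : t ∈ Finset.univ) => by
          rw [hDdet t, Finset.mul_sum]]
        rw [Finset.sum_comm]
        refine Finset.sum_congr rfl fun σ _ => ?_
        rw [Finset.sum_congr rfl fun t (_ : t ∈ Finset.univ) => by
          rw [mul_smul_comm]]
        rw [← Finset.smul_sum]
        congr 1
        rw [Finset.sum_congr rfl fun t (_ : t ∈ Finset.univ) => by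
          rw [Finset.mul_sum]]
        rw [Finset.sum_comm]
        refine Finset.sum_congr rfl fun i _ => ?_
        refine Finset.sum_congr rfl fun t _ => ?_
        rw [← mul_assoc, center_comm, mul_assoc]
    _ = ∑ σ : Equiv.Perm (Fin m), (Equiv.Perm.sign σ : ℤ) •
          ∑ i, (((∏ k ∈ Finset.univ.erase i, Bc (θ := θ) hcent (σ k) k
              : Subring.center Λ) : Λ)
            * ((1 - XM θ : Matrix (Fin m) (Fin m) Λ) l (σ i) * hatM θ i jj)
          + ((∏ k ∈ Finset.univ.erase i, Bc (θ := θ) hcent (σ k) k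
              : Subring.center Λ) : Λ)
            * ((1 - XM θ : Matrix (Fin m) (Fin m) Λ) l i * hatM θ (σ i) jj)) := by
        refine Finset.sum_congr rfl fun σ _ => ?_
        congr 1
        refine Finset.sum_congr rfl fun i _ => ?_
        rw [← Finset.mul_sum, hsum_t (σ i) i, mul_add]
    _ = (∑ σ : Equiv.Perm (Fin m), (Equiv.Perm.sign σ : ℤ) •
          ∑ i, ((∏ k ∈ Finset.univ.erase i, Bc (θ := θ) hcent (σ k) k
              : Subring.center Λ) : Λ)
            * ((1 - XM θ : Matrix (Fin m) (Fin m) Λ) l (σ i) * hatM θ i jj))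
        + (∑ σ : Equiv.Perm (Fin m), (Equiv.Perm.sign σ : ℤ) •
          ∑ i, ((∏ k ∈ Finset.univ.erase i, Bc (θ := θ) hcent (σ k) k
              : Subring.center Λ) : Λ)
            * ((1 - XM θ : Matrix (Fin m) (Fin m) Λ) l i * hatM θ (σ i) jj)) := by
        rw [← Finset.sum_add_distrib]
        refine Finset.sum_congr rfl fun σ _ => ?_
        rw [Finset.sum_add_distrib, smul_add]
    _ = (((Bc (θ := θ) hcent).det : Subring.center Λ) : Λ) * hatM θ l jj
        + (((Bc (θ := θ) hcent).det : Subring.center Λ) : Λ) * hatM θ l jj := by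
        rw [T1_eq hodd hcent l jj, T2_eq hodd hcent l jj]

end Det

lemma list_prod_approx (L : List (Fin m)) (g : Fin m → Λ) (c : Fin m → ℝ)
    (h : ∀ i, g i - c i • 1 ∈ Jmod θ 2) :
    (L.map g).prod - ((L.map c).prod) • (1 : Λ) ∈ Jmod θ 2 := by
  induction L with
  | nil => simp
  | cons i t ih =>
    rw [List.map_cons, List.prod_cons, List.map_cons, List.prod_cons]
    have expand : g i * (t.map g).prod - ((c i) * (t.map c).prod) • (1 : Λ)
        = (g i - c i • 1) * ((t.map g).prod - (t.map c).prod • 1)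
          + (t.map c).prod • (g i - c i • 1)
          + c i • ((t.map g).prod - (t.map c).prod • 1) := by
      simp only [sub_mul, mul_sub, smul_mul_assoc, mul_smul_comm, one_mul, mul_one,
        smul_smul, smul_sub, sub_smul]
      module
    rw [expand]
    exact add_mem (add_mem (Jmod_le (by norm_num) (Jmod_mul (h i) ih))
      (Submodule.smul_mem _ _ (h i))) (Submodule.smul_mem _ _ ih)

lemma ncdet_sub_one_mem :
    ncDet (1 - XM θ : Matrix (Fin m) (Fin m) Λ) - 1 ∈ Jmod θ 2 := by
  classical
  have hentry : ∀ (σ : Equiv.Perm (Fin m)) (i : Fin m),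
      (1 - XM θ : Matrix (Fin m) (Fin m) Λ) (σ i) i
        - (if σ i = i then (1 : ℝ) else 0) • (1 : Λ) ∈ Jmod θ 2 := by
    intro σ i
    have heq : (1 - XM θ : Matrix (Fin m) (Fin m) Λ) (σ i) i
        - (if σ i = i then (1 : ℝ) else 0) • (1 : Λ) = -XM θ (σ i) i := by
      rw [Matrix.sub_apply, Matrix.one_apply]
      by_cases hh : σ i = i <;> simp [hh]
    rw [heq]
    exact Submodule.neg_mem _ (XM_mem_J2 (σ i) i)
  have hσ : ∀ σ : Equiv.Perm (Fin m),
      ((List.finRange m).map fun i => (1 - XM θ : Matrix (Fin m) (Fin m) Λ) (σ i) i).prod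
        - (((List.finRange m).map fun i => if σ i = i then (1 : ℝ) else 0).prod) • (1 : Λ)
      ∈ Jmod θ 2 := fun σ =>
    list_prod_approx (List.finRange m) _ _ (hentry σ)
  have hscal : (∑ σ : Equiv.Perm (Fin m), (Equiv.Perm.sign σ : ℤ) •
      ((List.finRange m).map fun i => if σ i = i then (1 : ℝ) else 0).prod) = 1 := by
    have hmap : ∀ σ : Equiv.Perm (Fin m),
        ((List.finRange m).map fun i => if σ i = i then (1 : ℝ) else 0)
        = (List.finRange m).map fun i => (1 : Matrix (Fin m) (Fin m) ℝ) (σ i) i := by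
      intro σ
      refine List.map_congr_left fun i _ => ?_
      rw [Matrix.one_apply]
    have : (∑ σ : Equiv.Perm (Fin m), (Equiv.Perm.sign σ : ℤ) •
        ((List.finRange m).map fun i => if σ i = i then (1 : ℝ) else 0).prod)
        = ncDet (1 : Matrix (Fin m) (Fin m) ℝ) := by
      rw [ncDet]
      exact Finset.sum_congr rfl fun σ _ => by rw [hmap σ]
    rw [this, ncDet_eq_det, Matrix.det_one]
  have hsplit : ncDet (1 - XM θ : Matrix (Fin m) (Fin m) Λ) - 1
      = ∑ σ : Equiv.Perm (Fin m), (Equiv.Perm.sign σ : ℤ) •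
          (((List.finRange m).map fun i => (1 - XM θ : Matrix (Fin m) (Fin m) Λ) (σ i) i).prod
            - (((List.finRange m).map fun i => if σ i = i then (1 : ℝ) else 0).prod)
              • (1 : Λ)) := by
    rw [Finset.sum_congr rfl fun (σ : Equiv.Perm (Fin m)) _ => smul_sub
      ((Equiv.Perm.sign σ : ℤ))
      (((List.finRange m).map fun i => (1 - XM θ : Matrix (Fin m) (Fin m) Λ) (σ i) i).prod)
      ((((List.finRange m).map fun i => if σ i = i then (1 : ℝ) else 0).prod) • (1 : Λ))]
    rw [Finset.sum_sub_distrib, ncDet]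
    congr 1
    have : ∀ σ : Equiv.Perm (Fin m), (Equiv.Perm.sign σ : ℤ) •
        ((((List.finRange m).map fun i => if σ i = i then (1 : ℝ) else 0).prod) • (1 : Λ))
        = ((Equiv.Perm.sign σ : ℤ) •
            ((List.finRange m).map fun i => if σ i = i then (1 : ℝ) else 0).prod) • (1 : Λ) :=
      fun σ => (smul_assoc _ _ _).symm
    rw [Finset.sum_congr rfl fun σ _ => this σ, ← Finset.sum_smul, hscal, one_smul]
  rw [hsplit]
  refine Submodule.sum_mem _ fun σ _ => ?_
  rw [← Int.cast_smul_eq_zsmul ℝ]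
  exact Submodule.smul_mem _ _ (hσ σ)

include hodd in
lemma xpow_mul_theta {x : Λ} (hx : x ∈ Jmod θ 2) (p : Fin n ⊕ Fin n) (q : Fin m) :
    x ^ (n * m) * θ p q = 0 := by
  have hpow : ∀ N : ℕ, x ^ N ∈ Jmod θ (2 * N) := by
    intro N
    induction N with
    | zero => exact Submodule.subset_span ⟨[], by simp, by simp⟩
    | succ N ihN =>
      rw [pow_succ]
      have := Jmod_mul ihN hx
      have heq : 2 * N + 2 = 2 * (N + 1) := by ring
      rwa [heq] at this
  have h2 : x ^ (n * m) ∈ Jmod θ (2 * n * m) := by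
    have := hpow (n * m)
    rwa [← mul_assoc] at this
  exact Jmod_mul_theta hodd h2 p q

lemma coeff_rec (k : ℕ) :
    (2 * ((k : ℝ) + 1)) * invSqrtCoeff (k + 1) = -(2 * (k : ℝ) + 1) * invSqrtCoeff k := by
  rw [invSqrtCoeff, invSqrtCoeff, Finset.prod_range_succ, Nat.factorial_succ]
  have h1 : (Nat.factorial k : ℝ) ≠ 0 := Nat.cast_ne_zero.mpr (Nat.factorial_ne_zero k)
  have h2 : ((k : ℝ) + 1) ≠ 0 := by positivity
  push_cast
  field_simp
  ring

end Aux

open Aux in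
/-- with `A² = I_m − θ̂θ`, the function
`f = det(A)⁻¹ = det(I_m − θ̂θ)^{-1/2}` (defined by the terminating binomial
series applied to the nilpotent part of the determinant) satisfies, for all
`l, j`, the differential equation `Σ_t (A²)_{lt} ∂_{θ_{jt}} f = −θ̂_{lj} f`. -/
theorem det_inv_sqrt_diff_eq (m n : ℕ) (Λ : Type*) [Ring Λ] [Algebra ℝ Λ]
    (θ : Matrix (Fin n ⊕ Fin n) (Fin m) Λ)
    (hodd : ∀ i j k l, θ i j * θ k l = -(θ k l * θ i j))
    (hcent : ∀ i j k l (c : Λ), Commute (θ i j * θ k l) c)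
    (D : (Fin n ⊕ Fin n) → Fin m → Module.End ℝ Λ)
    (hD1 : ∀ i j, D i j 1 = 0)
    (hDθ : ∀ i j k l (u : Λ),
      D i j (θ k l * u) = (if k = i ∧ l = j then u else 0) - θ k l * D i j u) :
    ∀ f : Λ,
      f = ∑ k ∈ Finset.range (n * m + 1),
            invSqrtCoeff k • (ncDet (1 - θᵀ * sympJ n Λ * θ) - 1) ^ k →
      ∀ (l : Fin m) (j : Fin n ⊕ Fin n),
        ∑ t : Fin m, ((1 - θᵀ * sympJ n Λ * θ : Matrix (Fin m) (Fin m) Λ)) l t * D j t f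
          = -((θᵀ * sympJ n Λ) l j * f) := by
  classical
  intro f hf l j
  have hBm : (1 - θᵀ * sympJ n Λ * θ : Matrix (Fin m) (Fin m) Λ) = 1 - XM θ := rfl
  have hmap : (1 - XM θ : Matrix (Fin m) (Fin m) Λ)
      = (Bc (θ := θ) hcent).map ((Subring.center Λ).subtype) := by
    ext a b; rfl
  have hdet_eq : ncDet (1 - θᵀ * sympJ n Λ * θ)
      = (((Bc (θ := θ) hcent).det : Subring.center Λ) : Λ) := by
    rw [hBm, hmap, ncDet_map, ncDet_eq_det]
    rfl
  set x' : Subring.center Λ := (Bc (θ := θ) hcent).det - 1 with hx'def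
  have hxx : ncDet (1 - θᵀ * sympJ n Λ * θ) - 1 = ((x' : Subring.center Λ) : Λ) := by
    rw [hdet_eq, hx'def]
    norm_cast
  have hx2 : ((x' : Subring.center Λ) : Λ) ∈ Jmod θ 2 := by
    rw [← hxx]
    exact ncdet_sub_one_mem
  have hcoe_x : ((x' : Subring.center Λ) : Λ)
      = (((Bc (θ := θ) hcent).det : Subring.center Λ) : Λ) - 1 := by
    rw [hx'def]; norm_cast
  have hLx' : ∀ t : Fin m, IsLeib D j t ((x' : Subring.center Λ) : Λ) := by
    intro t
    rw [hcoe_x]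
    exact isLeib_sub (isLeib_cdet hcent hD1 hDθ) (isLeib_one hD1)
  have hxk : ∀ k : ℕ, (ncDet (1 - θᵀ * sympJ n Λ * θ) - 1) ^ k
      = ((x' ^ k : Subring.center Λ) : Λ) := by
    intro k; rw [hxx]; norm_cast
  -- derivative of f
  have hDf : ∀ t : Fin m, D j t f = ∑ k ∈ Finset.range (n * m + 1),
      invSqrtCoeff k • (k • (((x' ^ (k - 1) : Subring.center Λ) : Λ)
        * D j t (((Bc (θ := θ) hcent).det : Subring.center Λ) : Λ))) := by
    intro t
    rw [hf, map_sum]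
    refine Finset.sum_congr rfl fun k _ => ?_
    rw [LinearMap.map_smul]
    congr 1
    rw [hxk k]
    have hprodrule := D_coe_prod hD1 (Finset.range k) (fun _ => x')
      (fun _ => hLx' t)
    rw [Finset.prod_const, Finset.card_range] at hprodrule
    rw [hprodrule]
    have herase : ∀ i ∈ Finset.range k,
        ((∏ _x ∈ (Finset.range k).erase i, x' : Subring.center Λ) : Λ)
            * D j t ((x' : Subring.center Λ) : Λ)
        = ((x' ^ (k - 1) : Subring.center Λ) : Λ)
            * D j t (((Bc (θ := θ) hcent).det : Subring.center Λ) : Λ) := by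
      intro i hi
      rw [Finset.prod_const, Finset.card_erase_of_mem hi, Finset.card_range]
      congr 1
      rw [hcoe_x, map_sub, hD1, sub_zero]
    rw [Finset.sum_congr rfl herase, Finset.sum_const, Finset.card_range]
  -- contracted sum for each k
  have hstep : ∀ k ∈ Finset.range (n * m + 1),
      (∑ t : Fin m, (1 - XM θ : Matrix (Fin m) (Fin m) Λ) l t
        * (invSqrtCoeff k • (k • (((x' ^ (k - 1) : Subring.center Λ) : Λ)
          * D j t (((Bc (θ := θ) hcent).det : Subring.center Λ) : Λ)))))
      = invSqrtCoeff k • (k • (((x' ^ (k - 1) : Subring.center Λ) : Λ)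
          * ((((Bc (θ := θ) hcent).det : Subring.center Λ) : Λ) * hatM θ l j
            + (((Bc (θ := θ) hcent).det : Subring.center Λ) : Λ) * hatM θ l j))) := by
    intro k _
    have h1 : ∀ t : Fin m, (1 - XM θ : Matrix (Fin m) (Fin m) Λ) l t
        * (invSqrtCoeff k • (k • (((x' ^ (k - 1) : Subring.center Λ) : Λ)
          * D j t (((Bc (θ := θ) hcent).det : Subring.center Λ) : Λ))))
        = invSqrtCoeff k • (k • (((x' ^ (k - 1) : Subring.center Λ) : Λ)
          * ((1 - XM θ : Matrix (Fin m) (Fin m) Λ) l t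
            * D j t (((Bc (θ := θ) hcent).det : Subring.center Λ) : Λ)))) := by
      intro t
      rw [mul_smul_comm, mul_smul_comm]
      congr 2
      rw [← mul_assoc, center_comm, mul_assoc]
    rw [Finset.sum_congr rfl fun t _ => h1 t, ← Finset.smul_sum]
    congr 1
    rw [← Finset.smul_sum]
    congr 1
    rw [← Finset.mul_sum]
    congr 1
    exact sum_B_D_det hodd hcent hD1 hDθ l j
  -- the right-hand side
  have hf2 : f = ∑ k ∈ Finset.range (n * m + 1),
      invSqrtCoeff k • ((x' ^ k : Subring.center Λ) : Λ) := by
    rw [hf]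
    exact Finset.sum_congr rfl fun k _ => by rw [hxk k]
  have hyf : (θᵀ * sympJ n Λ) l j * f = ∑ k ∈ Finset.range (n * m + 1),
      invSqrtCoeff k • (((x' ^ k : Subring.center Λ) : Λ) * hatM θ l j) := by
    have : (θᵀ * sympJ n Λ) l j = hatM θ l j := rfl
    rw [this, hf2, Finset.mul_sum]
    refine Finset.sum_congr rfl fun k _ => ?_
    rw [mul_smul_comm]
    congr 1
    exact center_comm _ _
  -- last term vanishes
  have hxNy : ((x' ^ (n * m) : Subring.center Λ) : Λ) * hatM θ l j = 0 := by
    have hpow : ((x' ^ (n * m) : Subring.center Λ) : Λ)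
        = ((x' : Subring.center Λ) : Λ) ^ (n * m) := by norm_cast
    cases j with
    | inl q =>
      rw [hat_inl, mul_neg, hpow, xpow_mul_theta hodd hx2, neg_zero]
    | inr q =>
      rw [hat_inr, hpow, xpow_mul_theta hodd hx2]
  -- per-term normal form
  have hterm : ∀ k ∈ Finset.range (n * m + 1),
      (invSqrtCoeff k • (k • (((x' ^ (k - 1) : Subring.center Λ) : Λ)
          * ((((Bc (θ := θ) hcent).det : Subring.center Λ) : Λ) * hatM θ l j
            + (((Bc (θ := θ) hcent).det : Subring.center Λ) : Λ) * hatM θ l j)))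
        + invSqrtCoeff k • (((x' ^ k : Subring.center Λ) : Λ) * hatM θ l j))
      = ((2 * (k : ℝ) + 1) * invSqrtCoeff k) • (((x' ^ k : Subring.center Λ) : Λ) * hatM θ l j)
        + ((2 * (k : ℝ)) * invSqrtCoeff k)
            • (((x' ^ (k - 1) : Subring.center Λ) : Λ) * hatM θ l j) := by
    intro k _
    rcases Nat.eq_zero_or_pos k with hk | hk
    · subst hk; simp
    · have hAB : ((x' ^ (k - 1) : Subring.center Λ) : Λ) * ((x' : Subring.center Λ) : Λ)
          = ((x' ^ k : Subring.center Λ) : Λ) := by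
        norm_cast
        rw [← pow_succ]
        congr 1
        omega
      have hd : (((Bc (θ := θ) hcent).det : Subring.center Λ) : Λ)
          = ((x' : Subring.center Λ) : Λ) + 1 := by
        rw [hcoe_x]; abel
      rw [hd]
      have hexp : ((x' ^ (k - 1) : Subring.center Λ) : Λ)
          * ((((x' : Subring.center Λ) : Λ) + 1) * hatM θ l j
            + (((x' : Subring.center Λ) : Λ) + 1) * hatM θ l j)
          = (((x' ^ k : Subring.center Λ) : Λ) * hatM θ l j
              + ((x' ^ (k - 1) : Subring.center Λ) : Λ) * hatM θ l j)
            + (((x' ^ k : Subring.center Λ) : Λ) * hatM θ l j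
              + ((x' ^ (k - 1) : Subring.center Λ) : Λ) * hatM θ l j) := by
        rw [add_mul, one_mul, mul_add, mul_add, ← mul_assoc, hAB]
      rw [hexp]
      rw [← Nat.cast_smul_eq_nsmul ℝ k, smul_smul]
      match_scalars <;> ring
  -- assemble
  have hkey : (∑ k ∈ Finset.range (n * m + 1),
      (invSqrtCoeff k • (k • (((x' ^ (k - 1) : Subring.center Λ) : Λ)
          * ((((Bc (θ := θ) hcent).det : Subring.center Λ) : Λ) * hatM θ l j
            + (((Bc (θ := θ) hcent).det : Subring.center Λ) : Λ) * hatM θ l j)))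
        + invSqrtCoeff k • (((x' ^ k : Subring.center Λ) : Λ) * hatM θ l j))) = 0 := by
    rw [Finset.sum_congr rfl hterm, Finset.sum_add_distrib]
    have hG2 : (∑ k ∈ Finset.range (n * m + 1), ((2 * (k : ℝ)) * invSqrtCoeff k)
          • (((x' ^ (k - 1) : Subring.center Λ) : Λ) * hatM θ l j))
        = ∑ k ∈ Finset.range (n * m), ((2 * ((k : ℝ) + 1)) * invSqrtCoeff (k + 1))
          • (((x' ^ k : Subring.center Λ) : Λ) * hatM θ l j) := by
      rw [Finset.sum_range_succ']
      simp only [Nat.cast_zero, mul_zero, zero_mul, zero_smul, add_zero]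
      refine Finset.sum_congr rfl fun k _ => ?_
      have h1 : ((k + 1 : ℕ) : ℝ) = (k : ℝ) + 1 := by push_cast; ring
      rw [h1, Nat.add_sub_cancel]
    have hG1 : (∑ k ∈ Finset.range (n * m + 1), ((2 * (k : ℝ) + 1) * invSqrtCoeff k)
          • (((x' ^ k : Subring.center Λ) : Λ) * hatM θ l j))
        = (∑ k ∈ Finset.range (n * m), ((2 * (k : ℝ) + 1) * invSqrtCoeff k)
          • (((x' ^ k : Subring.center Λ) : Λ) * hatM θ l j))
          + ((2 * ((n * m : ℕ) : ℝ) + 1) * invSqrtCoeff (n * m))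
            • (((x' ^ (n * m) : Subring.center Λ) : Λ) * hatM θ l j) :=
      Finset.sum_range_succ _ _
    rw [hG1, hG2, hxNy, smul_zero, add_zero, ← Finset.sum_add_distrib]
    refine Finset.sum_eq_zero fun k _ => ?_
    rw [← add_smul, coeff_rec k]
    have : -(2 * (k : ℝ) + 1) * invSqrtCoeff k + (2 * (k : ℝ) + 1) * invSqrtCoeff k = 0 := by
      ring
    rw [add_comm, this, zero_smul]
  -- conclude
  calc ∑ t : Fin m, (1 - θᵀ * sympJ n Λ * θ : Matrix (Fin m) (Fin m) Λ) l t * D j t f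
      = ∑ k ∈ Finset.range (n * m + 1),
          (∑ t : Fin m, (1 - XM θ : Matrix (Fin m) (Fin m) Λ) l t
            * (invSqrtCoeff k • (k • (((x' ^ (k - 1) : Subring.center Λ) : Λ)
              * D j t (((Bc (θ := θ) hcent).det : Subring.center Λ) : Λ))))) := by
        rw [Finset.sum_congr rfl fun t (_ : t ∈ Finset.univ) => by
          rw [hDf t, Finset.mul_sum]]
        exact Finset.sum_comm
    _ = ∑ k ∈ Finset.range (n * m + 1),
          invSqrtCoeff k • (k • (((x' ^ (k - 1) : Subring.center Λ) : Λ)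
            * ((((Bc (θ := θ) hcent).det : Subring.center Λ) : Λ) * hatM θ l j
              + (((Bc (θ := θ) hcent).det : Subring.center Λ) : Λ) * hatM θ l j))) :=
        Finset.sum_congr rfl hstep
    _ = -((θᵀ * sympJ n Λ) l j * f) := by
        rw [hyf]
        rw [Finset.sum_add_distrib] at hkey
        exact eq_neg_of_add_eq_zero_left hkey
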